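/- arXiv:1806.03035 — 3 statements merged into one kernel-verified Lean document; each statement's English description precedes it below -/
import Mathlib

section
/- Let Λ be a lattice in ℂ², and let ℓ₁ and ℓ₂ be two distinct one-dimensional ℂ-subspaces of ℂ² such that, for i = 1, 2, the intersection Λ ∩ ℓᵢ spans ℓᵢ over ℝ. Then the additive group homomorphism from (ℓ₁ ⧸ (Λ ∩ ℓ₁)) × (ℓ₂ ⧸ (Λ ∩ ℓ₂)) to ℂ² ⧸ Λ induced by (x, y) ↦ x + y is surjective and has finite kernel. -/
open Submodule Module

private lemma aux_finite (K L : AddSubgroup (ℂ × ℂ)) (hLK : L ≤ K)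
    (hd : DiscreteTopology K)
    (hs : Submodule.span ℝ (L : Set (ℂ × ℂ)) = ⊤) :
    Finite (↥K ⧸ L.addSubgroupOf K) := by
  have hK : Submodule.span ℝ (K : Set (ℂ × ℂ)) = ⊤ :=
    top_unique (hs ▸ Submodule.span_mono hLK)
  set K' : Submodule ℤ (ℂ × ℂ) := K.toIntSubmodule with hK'
  set L' : Submodule ℤ (ℂ × ℂ) := L.toIntSubmodule with hL'
  haveI : DiscreteTopology K' := hd
  haveI : DiscreteTopology L' := DiscreteTopology.of_subset hd hLK
  haveI : IsZLattice ℝ K' := ⟨hK⟩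
  haveI : IsZLattice ℝ L' := ⟨hs⟩
  haveI : Module.Finite ℤ K' := ZLattice.module_finite ℝ K'
  haveI : Module.Free ℤ K' := ZLattice.module_free ℝ K'
  haveI : Module.Finite ℤ L' := ZLattice.module_finite ℝ L'
  haveI : Module.Free ℤ L' := ZLattice.module_free ℝ L'
  set P : Submodule ℤ K' := L'.comap K'.subtype with hP
  have hrankP : Module.rank ℤ P = Module.rank ℤ K' := by
    have e := Submodule.comapSubtypeEquivOfLe (p := L') (q := K') hLK
    rw [e.rank_eq, ← Module.finrank_eq_rank, ← Module.finrank_eq_rank]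
    rw [ZLattice.rank ℝ L', ZLattice.rank ℝ K']
  have hrn := rank_quotient_add_rank_of_isDomain (R := ℤ) (M := K') P
  rw [hrankP] at hrn
  have hfin : Module.rank ℤ K' < Cardinal.aleph0 := by
    rw [← Module.finrank_eq_rank]
    exact Cardinal.nat_lt_aleph0 _
  have hzero : Module.rank ℤ (K' ⧸ P) = 0 := by
    have hle : Module.rank ℤ (K' ⧸ P) ≤ Module.rank ℤ K' :=
      le_of_le_of_eq (le_self_add) hrn
    have h1 : Cardinal.toNat (Module.rank ℤ (K' ⧸ P)) + Cardinal.toNat (Module.rank ℤ K')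
        = Cardinal.toNat (Module.rank ℤ K') := by
      rw [← Cardinal.toNat_add (lt_of_le_of_lt hle hfin) hfin, hrn]
    have h2 : Cardinal.toNat (Module.rank ℤ (K' ⧸ P)) = 0 := by omega
    rcases (Cardinal.toNat_eq_zero).mp h2 with h | h
    · exact h
    · exact absurd h (not_le.mpr (lt_of_le_of_lt hle hfin)).elim
  have htor : Module.IsTorsion ℤ (K' ⧸ P) := _root_.rank_eq_zero_iff_isTorsion.mp hzero
  haveI : Module.Finite ℤ (K' ⧸ P) := inferInstance
  have hfinQ : Finite (K' ⧸ P) := Module.finite_of_fg_torsion _ htor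
  exact hfinQ


/-- For a lattice `Λ` in `ℂ²` and distinct complex lines `ℓ₁, ℓ₂` such that `Λ ∩ ℓᵢ`
spans `ℓᵢ` over `ℝ`, the homomorphism
`(ℓ₁ ⧸ (Λ ∩ ℓ₁)) × (ℓ₂ ⧸ (Λ ∩ ℓ₂)) → ℂ² ⧸ Λ` induced by `(x, y) ↦ x + y` is
surjective with finite kernel. -/
theorem induced_map_surjective_finite_kernel (Λ : AddSubgroup (ℂ × ℂ))
    (hdisc : DiscreteTopology Λ)
    (hspan : Submodule.span ℝ (Λ : Set (ℂ × ℂ)) = ⊤)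
    (ℓ₁ ℓ₂ : Submodule ℂ (ℂ × ℂ))
    (h₁ : Module.finrank ℂ ℓ₁ = 1) (h₂ : Module.finrank ℂ ℓ₂ = 1)
    (hne : ℓ₁ ≠ ℓ₂)
    (hs₁ : Submodule.span ℝ ((Λ : Set (ℂ × ℂ)) ∩ (ℓ₁ : Set (ℂ × ℂ))) =
      ℓ₁.restrictScalars ℝ)
    (hs₂ : Submodule.span ℝ ((Λ : Set (ℂ × ℂ)) ∩ (ℓ₂ : Set (ℂ × ℂ))) =
      ℓ₂.restrictScalars ℝ) :
    ∃ f : (↥ℓ₁.toAddSubgroup ⧸ Λ.addSubgroupOf ℓ₁.toAddSubgroup) ×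
          (↥ℓ₂.toAddSubgroup ⧸ Λ.addSubgroupOf ℓ₂.toAddSubgroup) →+
          (ℂ × ℂ) ⧸ Λ,
      (∀ (x : ℓ₁.toAddSubgroup) (y : ℓ₂.toAddSubgroup),
          f (QuotientAddGroup.mk x, QuotientAddGroup.mk y) =
            QuotientAddGroup.mk ((x : ℂ × ℂ) + (y : ℂ × ℂ))) ∧
      Function.Surjective f ∧ Finite (↥f.ker) := by
  have hdim : Module.finrank ℂ (ℂ × ℂ) = 2 := by
    simp [Module.finrank_prod]
  -- the two lines intersect trivially
  have hinf : ℓ₁ ⊓ ℓ₂ = ⊥ := by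
    rcases eq_or_lt_of_le (inf_le_left : ℓ₁ ⊓ ℓ₂ ≤ ℓ₁) with h | h
    · have hle : ℓ₁ ≤ ℓ₂ := by rw [← h]; exact inf_le_right
      exact absurd (Submodule.eq_of_le_of_finrank_eq hle (h₁.trans h₂.symm)) hne
    · have hlt := Submodule.finrank_lt_finrank_of_lt h
      rw [h₁] at hlt
      have h0 : Module.finrank ℂ ↥(ℓ₁ ⊓ ℓ₂) = 0 := by omega
      exact Submodule.finrank_eq_zero.mp h0
  -- the two lines span everything
  have hsup : ℓ₁ ⊔ ℓ₂ = ⊤ := by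
    apply Submodule.eq_top_of_finrank_eq
    have := Submodule.finrank_sup_add_finrank_inf_eq ℓ₁ ℓ₂
    rw [hinf, h₁, h₂] at this
    simp only [finrank_bot] at this
    omega
  have hdec : ∀ v : ℂ × ℂ, ∃ x ∈ ℓ₁, ∃ y ∈ ℓ₂, x + y = v := fun v =>
    Submodule.mem_sup.mp (hsup ▸ Submodule.mem_top (x := v))
  -- construct f
  let f₁ : (↥ℓ₁.toAddSubgroup ⧸ Λ.addSubgroupOf ℓ₁.toAddSubgroup) →+ (ℂ × ℂ) ⧸ Λ :=
    QuotientAddGroup.lift _ ((QuotientAddGroup.mk' Λ).comp ℓ₁.toAddSubgroup.subtype)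
      (fun x hx => (QuotientAddGroup.eq_zero_iff _).mpr hx)
  let f₂ : (↥ℓ₂.toAddSubgroup ⧸ Λ.addSubgroupOf ℓ₂.toAddSubgroup) →+ (ℂ × ℂ) ⧸ Λ :=
    QuotientAddGroup.lift _ ((QuotientAddGroup.mk' Λ).comp ℓ₂.toAddSubgroup.subtype)
      (fun x hx => (QuotientAddGroup.eq_zero_iff _).mpr hx)
  refine ⟨f₁.coprod f₂, ?_, ?_, ?_⟩
  · intro x y
    rfl
  · -- surjectivity
    intro q
    obtain ⟨v, rfl⟩ := QuotientAddGroup.mk_surjective q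
    obtain ⟨x, hx, y, hy, hxy⟩ := hdec v
    refine ⟨(QuotientAddGroup.mk ⟨x, hx⟩, QuotientAddGroup.mk ⟨y, hy⟩), ?_⟩
    show QuotientAddGroup.mk (x + y) = QuotientAddGroup.mk v
    rw [hxy]
  · -- finite kernel
    set Lsum : AddSubgroup (ℂ × ℂ) := (Λ ⊓ ℓ₁.toAddSubgroup) ⊔ (Λ ⊓ ℓ₂.toAddSubgroup)
      with hLsum
    have hLle : Lsum ≤ Λ := sup_le inf_le_left inf_le_left
    have hspanL : Submodule.span ℝ (Lsum : Set (ℂ × ℂ)) = ⊤ := by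
      rw [eq_top_iff]
      rintro v -
      obtain ⟨x, hx, y, hy, rfl⟩ := hdec v
      have hsub₁ : ((Λ : Set (ℂ × ℂ)) ∩ (ℓ₁ : Set (ℂ × ℂ))) ⊆ (Lsum : Set (ℂ × ℂ)) :=
        fun a ⟨ha1, ha2⟩ => AddSubgroup.mem_sup_left ⟨ha1, ha2⟩
      have hsub₂ : ((Λ : Set (ℂ × ℂ)) ∩ (ℓ₂ : Set (ℂ × ℂ))) ⊆ (Lsum : Set (ℂ × ℂ)) :=
        fun a ⟨ha1, ha2⟩ => AddSubgroup.mem_sup_right ⟨ha1, ha2⟩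
      have hx' : x ∈ Submodule.span ℝ (Lsum : Set (ℂ × ℂ)) :=
        Submodule.span_mono hsub₁ (hs₁ ▸ hx : x ∈ Submodule.span ℝ ((Λ : Set (ℂ × ℂ)) ∩ (ℓ₁ : Set (ℂ × ℂ))))
      have hy' : y ∈ Submodule.span ℝ (Lsum : Set (ℂ × ℂ)) :=
        Submodule.span_mono hsub₂ (hs₂ ▸ hy : y ∈ Submodule.span ℝ ((Λ : Set (ℂ × ℂ)) ∩ (ℓ₂ : Set (ℂ × ℂ))))
      exact Submodule.add_mem _ hx' hy'
    -- the auxiliary map g into (ℂ × ℂ) ⧸ Lsum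
    let g₁ : (↥ℓ₁.toAddSubgroup ⧸ Λ.addSubgroupOf ℓ₁.toAddSubgroup) →+ (ℂ × ℂ) ⧸ Lsum :=
      QuotientAddGroup.lift _ ((QuotientAddGroup.mk' Lsum).comp ℓ₁.toAddSubgroup.subtype)
        (fun x hx => (QuotientAddGroup.eq_zero_iff _).mpr
          (AddSubgroup.mem_sup_left ⟨hx, x.2⟩))
    let g₂ : (↥ℓ₂.toAddSubgroup ⧸ Λ.addSubgroupOf ℓ₂.toAddSubgroup) →+ (ℂ × ℂ) ⧸ Lsum :=
      QuotientAddGroup.lift _ ((QuotientAddGroup.mk' Lsum).comp ℓ₂.toAddSubgroup.subtype)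
        (fun x hx => (QuotientAddGroup.eq_zero_iff _).mpr
          (AddSubgroup.mem_sup_right ⟨hx, x.2⟩))
    set g := g₁.coprod g₂ with hgdef
    have hginj : Function.Injective g := by
      rw [injective_iff_map_eq_zero]
      rintro ⟨a, b⟩ hab
      obtain ⟨x, rfl⟩ := QuotientAddGroup.mk_surjective a
      obtain ⟨y, rfl⟩ := QuotientAddGroup.mk_surjective b
      have h0 : ((x : ℂ × ℂ) + (y : ℂ × ℂ)) ∈ Lsum :=
        (QuotientAddGroup.eq_zero_iff _).mp hab
      obtain ⟨u, hu, w, hw, huw⟩ := AddSubgroup.mem_sup.mp h0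
      have hxu : (x : ℂ × ℂ) - u ∈ ℓ₁ ⊓ ℓ₂ := by
        constructor
        · exact Submodule.sub_mem _ x.2 hu.2
        · have : (x : ℂ × ℂ) - u = w - y := by
            have := huw
            linear_combination -this
          rw [this]
          exact Submodule.sub_mem _ hw.2 y.2
      rw [hinf] at hxu
      have hxu' : (x : ℂ × ℂ) = u := by
        have := (Submodule.mem_bot ℂ).mp hxu
        linear_combination this
      have hyw : (y : ℂ × ℂ) = w := by
        have h := huw
        rw [← hxu'] at h
        linear_combination -h
      have hxΛ : x ∈ Λ.addSubgroupOf ℓ₁.toAddSubgroup := by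
        show (x : ℂ × ℂ) ∈ Λ; rw [hxu']; exact hu.1
      have hyΛ : y ∈ Λ.addSubgroupOf ℓ₂.toAddSubgroup := by
        show (y : ℂ × ℂ) ∈ Λ; rw [hyw]; exact hw.1
      exact Prod.ext ((QuotientAddGroup.eq_zero_iff _).mpr hxΛ)
        ((QuotientAddGroup.eq_zero_iff _).mpr hyΛ)
    -- Λ ⧸ Lsum is finite
    have hfinQ : Finite (↥Λ ⧸ Lsum.addSubgroupOf Λ) := aux_finite Λ Lsum hLle hdisc hspanL
    let f' : ↥Λ →+ (ℂ × ℂ) ⧸ Lsum := (QuotientAddGroup.mk' Lsum).comp Λ.subtype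
    have hker : f'.ker = Lsum.addSubgroupOf Λ := by
      ext z
      simp only [AddMonoidHom.mem_ker, AddSubgroup.mem_addSubgroupOf]
      exact QuotientAddGroup.eq_zero_iff _
    have hfr : Finite ↥f'.range := by
      haveI : Finite (↥Λ ⧸ f'.ker) := by rw [hker]; exact hfinQ
      exact Finite.of_equiv _ (QuotientAddGroup.quotientKerEquivRange f').toEquiv
    -- kernel of f injects into the range of f'
    have hmem : ∀ z : ↥(f₁.coprod f₂).ker, g (z : _) ∈ f'.range := by
      rintro ⟨⟨a, b⟩, hz⟩
      obtain ⟨x, rfl⟩ := QuotientAddGroup.mk_surjective a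
      obtain ⟨y, rfl⟩ := QuotientAddGroup.mk_surjective b
      have hΛ : ((x : ℂ × ℂ) + (y : ℂ × ℂ)) ∈ Λ := by
        have h0 : (f₁.coprod f₂) (QuotientAddGroup.mk x, QuotientAddGroup.mk y) = 0 := hz
        exact (QuotientAddGroup.eq_zero_iff _).mp h0
      exact ⟨⟨_, hΛ⟩, rfl⟩
    have hj : Function.Injective (fun z : ↥(f₁.coprod f₂).ker => (⟨g (z : _), hmem z⟩ : ↥f'.range)) := by
      intro z w h
      exact Subtype.ext (hginj (congrArg Subtype.val h))
    exact Finite.of_injective _ hj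
end

section
/- Let Λ be a lattice in ℂ², and let ℓ₁ and ℓ₂ be two distinct one-dimensional ℂ-subspaces of ℂ² such that, for i = 1, 2, the intersection Λ ∩ ℓᵢ spans ℓᵢ over ℝ. Let q : ℂ² → ℂ² be the ℂ-linear projection onto ℓ₁ with kernel ℓ₂. Then q(Λ) is a discrete subgroup of ℂ², it contains Λ ∩ ℓ₁, and the quotient q(Λ) ⧸ (Λ ∩ ℓ₁) is finite. -/
open Module Submodule

lemma two_le_rank_of_span (S : Submodule ℤ (ℂ × ℂ)) (W : Submodule ℂ (ℂ × ℂ))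
    (hW : Module.finrank ℂ W = 1)
    (hsp : Submodule.span ℝ (S : Set (ℂ × ℂ)) = W.restrictScalars ℝ) :
    2 ≤ Module.rank ℤ S := by
  have hWr : Module.finrank ℝ (W.restrictScalars ℝ) = 2 := by
    have := Module.finrank_mul_finrank ℝ ℂ W
    rw [hW, Complex.finrank_real_complex, mul_one] at this
    exact this.symm
  obtain ⟨t, hts, hspan_t, hli⟩ := exists_linearIndependent ℝ (S : Set (ℂ × ℂ))
  rw [hsp] at hspan_t
  have h2t : (2 : Cardinal) = (Cardinal.mk t) := by
    rw [← rank_span_set hli, hspan_t]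
    rw [← Module.finrank_eq_rank, hWr]
    norm_num
  have hliZ : LinearIndependent ℤ ((↑) : t → (ℂ × ℂ)) :=
    hli.restrict_scalars (by intro a b h; simpa using h)
  have hliS : LinearIndependent ℤ (fun x : t => (⟨x.1, hts x.2⟩ : S)) := by
    refine LinearIndependent.of_comp S.subtype ?_
    exact hliZ
  have hle := hliS.cardinal_le_rank
  rwa [← h2t] at hle

set_option maxHeartbeats 1000000 in
/-- For a lattice `Λ` in `ℂ²` and distinct complex lines `ℓ₁, ℓ₂` such that `Λ ∩ ℓᵢ`
spans `ℓᵢ` over `ℝ`, the image of `Λ` under the `ℂ`-linear projection `q` onto `ℓ₁`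
with kernel `ℓ₂` is discrete, contains `Λ ∩ ℓ₁`, and `q(Λ) ⧸ (Λ ∩ ℓ₁)` is finite. -/
theorem proj_lattice_discrete_finite_quotient (Λ : AddSubgroup (ℂ × ℂ))
    (hdisc : DiscreteTopology Λ)
    (hspan : Submodule.span ℝ (Λ : Set (ℂ × ℂ)) = ⊤)
    (ℓ₁ ℓ₂ : Submodule ℂ (ℂ × ℂ))
    (h₁ : Module.finrank ℂ ℓ₁ = 1) (h₂ : Module.finrank ℂ ℓ₂ = 1)
    (hne : ℓ₁ ≠ ℓ₂)
    (hs₁ : Submodule.span ℝ ((Λ : Set (ℂ × ℂ)) ∩ (ℓ₁ : Set (ℂ × ℂ))) =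
      ℓ₁.restrictScalars ℝ)
    (hs₂ : Submodule.span ℝ ((Λ : Set (ℂ × ℂ)) ∩ (ℓ₂ : Set (ℂ × ℂ))) =
      ℓ₂.restrictScalars ℝ)
    (q : (ℂ × ℂ) →ₗ[ℂ] (ℂ × ℂ))
    (hrange : LinearMap.range q = ℓ₁)
    (hfix : ∀ x ∈ ℓ₁, q x = x)
    (hker : LinearMap.ker q = ℓ₂) :
    DiscreteTopology (↥(Λ.map q.toAddMonoidHom)) ∧
    (Λ ⊓ ℓ₁.toAddSubgroup) ≤ Λ.map q.toAddMonoidHom ∧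
    Finite (↥(Λ.map q.toAddMonoidHom) ⧸
      (Λ ⊓ ℓ₁.toAddSubgroup).addSubgroupOf (Λ.map q.toAddMonoidHom)) := by
  classical
  have hle : (Λ ⊓ ℓ₁.toAddSubgroup) ≤ Λ.map q.toAddMonoidHom := by
    rintro x ⟨hxΛ, hxl⟩
    exact ⟨x, hxΛ, hfix x hxl⟩
  set M : Submodule ℤ (ℂ × ℂ) := AddSubgroup.toIntSubmodule Λ with hM
  set qz : (ℂ × ℂ) →ₗ[ℤ] (ℂ × ℂ) := q.restrictScalars ℤ with hqz
  set A : Submodule ℤ (ℂ × ℂ) := M.map qz with hA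
  set B : Submodule ℤ (ℂ × ℂ) := AddSubgroup.toIntSubmodule (Λ ⊓ ℓ₁.toAddSubgroup) with hB
  set K2 : Submodule ℤ (ℂ × ℂ) := AddSubgroup.toIntSubmodule (Λ ⊓ ℓ₂.toAddSubgroup) with hK2
  haveI hMd : DiscreteTopology M := hdisc
  haveI : IsZLattice ℝ M := ⟨by rw [AddSubgroup.coe_toIntSubmodule]; exact hspan⟩
  haveI : Module.Finite ℤ A := Module.Finite.map M qz
  -- rank of M
  have hrankM : Module.rank ℤ M = 4 := by
    have h1 := ZLattice.rank ℝ M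
    have h2 : Module.finrank ℝ (ℂ × ℂ) = 4 := by
      simp [Module.finrank_prod, Complex.finrank_real_complex]
    rw [← Module.finrank_eq_rank, h1, h2]
    norm_num
  set φ : M →ₗ[ℤ] (ℂ × ℂ) := qz.comp M.subtype with hφ
  have hrange_φ : LinearMap.range φ = A := by
    rw [hφ, LinearMap.range_comp, Submodule.range_subtype]
  have hK2M : K2 ≤ M := by
    intro x hx
    exact hx.1
  have hker_φ : LinearMap.ker φ = K2.comap M.subtype := by
    ext x
    have hx2 : (x : ℂ × ℂ) ∈ ℓ₂ ↔ q (x : ℂ × ℂ) = 0 := by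
      rw [← hker]; exact Iff.rfl
    simp only [LinearMap.mem_ker, Submodule.mem_comap, hφ, LinearMap.comp_apply,
      Submodule.subtype_apply]
    show q (x : ℂ × ℂ) = 0 ↔ (x : ℂ × ℂ) ∈ K2
    have hmem : (x : ℂ × ℂ) ∈ K2 ↔ (x : ℂ × ℂ) ∈ Λ ∧ (x : ℂ × ℂ) ∈ ℓ₂ := Iff.rfl
    rw [hmem]
    constructor
    · intro h
      exact ⟨x.2, hx2.mpr h⟩
    · intro h
      exact hx2.mp h.2
  have hBle : B ≤ A := by
    intro x hx
    obtain ⟨y, hy, hyx⟩ := hle hx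
    exact ⟨y, hy, hyx⟩
  -- rank computations
  have e1 : Module.rank ℤ (M ⧸ LinearMap.ker φ) + Module.rank ℤ (LinearMap.ker φ)
      = Module.rank ℤ M := Submodule.rank_quotient_add_rank _
  have eA : Module.rank ℤ A = Module.rank ℤ (M ⧸ LinearMap.ker φ) := by
    rw [← hrange_φ]
    exact φ.quotKerEquivRange.rank_eq.symm
  have eK : Module.rank ℤ (LinearMap.ker φ) = Module.rank ℤ K2 := by
    rw [hker_φ]
    exact (Submodule.comapSubtypeEquivOfLe hK2M).rank_eq
  have hK2rank : 2 ≤ Module.rank ℤ K2 := by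
    refine two_le_rank_of_span _ _ h₂ ?_
    rw [hK2, AddSubgroup.coe_toIntSubmodule, AddSubgroup.coe_inf]
    exact hs₂
  have hBrank : 2 ≤ Module.rank ℤ B := by
    refine two_le_rank_of_span _ _ h₁ ?_
    rw [hB, AddSubgroup.coe_toIntSubmodule, AddSubgroup.coe_inf]
    exact hs₁
  set B' : Submodule ℤ A := B.comap A.subtype with hB'
  have e2 : Module.rank ℤ (A ⧸ B') + Module.rank ℤ B' = Module.rank ℤ A :=
    Submodule.rank_quotient_add_rank _
  have eB : Module.rank ℤ B' = Module.rank ℤ B :=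
    (Submodule.comapSubtypeEquivOfLe hBle).rank_eq
  -- derive rank (A ⧸ B') = 0
  have hx0 : Module.rank ℤ (A ⧸ B') = 0 := by
    have hAK : Module.rank ℤ A + Module.rank ℤ K2 = 4 := by
      rw [eA, ← eK, e1, hrankM]
    obtain ⟨a, ha⟩ := Cardinal.lt_aleph0.1 (Module.rank_lt_aleph0 ℤ A)
    have hKfin : Module.rank ℤ K2 < Cardinal.aleph0 := by
      refine lt_of_le_of_lt (le_of_le_of_eq ?_ hAK) (by exact_mod_cast Cardinal.nat_lt_aleph0 4)
      exact le_add_self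
    obtain ⟨k, hk⟩ := Cardinal.lt_aleph0.1 hKfin
    have hXfin : Module.rank ℤ (A ⧸ B') < Cardinal.aleph0 := by
      refine lt_of_le_of_lt (le_of_le_of_eq ?_ e2) ?_
      · exact le_self_add
      · rw [ha]; exact Cardinal.nat_lt_aleph0 a
    obtain ⟨x, hx⟩ := Cardinal.lt_aleph0.1 hXfin
    have hBfin : Module.rank ℤ B' < Cardinal.aleph0 := by
      refine lt_of_le_of_lt (le_of_le_of_eq ?_ e2) ?_
      · exact le_add_self
      · rw [ha]; exact Cardinal.nat_lt_aleph0 a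
    obtain ⟨b, hb⟩ := Cardinal.lt_aleph0.1 hBfin
    have hAK' : a + k = 4 := by rw [ha, hk] at hAK; exact_mod_cast hAK
    have he2' : x + b = a := by rw [hx, hb, ha] at e2; exact_mod_cast e2
    have hk2' : 2 ≤ k := by rw [hk] at hK2rank; exact_mod_cast hK2rank
    have hb2' : 2 ≤ b := by
      have h2B' : (2 : Cardinal) ≤ Module.rank ℤ B' := by rw [eB]; exact hBrank
      rw [hb] at h2B'
      exact_mod_cast h2B'
    have hxz : x = 0 := by omega
    rw [hx, hxz]
    norm_num
  have htor : Module.IsTorsion ℤ (A ⧸ B') := Module.rank_eq_zero_iff_isTorsion.mp hx0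
  have hfinAB : Finite (A ⧸ B') := Module.finite_of_fg_torsion _ htor
  -- transfer finiteness to the AddSubgroup quotient
  have hmemA : ∀ x : (Λ.map q.toAddMonoidHom), (x : ℂ × ℂ) ∈ A := by
    rintro ⟨x, hx⟩
    obtain ⟨y, hy, rfl⟩ := hx
    exact ⟨y, hy, rfl⟩
  set j : (Λ.map q.toAddMonoidHom) →+ A :=
    AddMonoidHom.mk' (fun x => (⟨(x : ℂ × ℂ), hmemA x⟩ : A)) (fun x y => rfl) with hj
  set F : (Λ.map q.toAddMonoidHom) →+ (A ⧸ B') :=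
    (B'.mkQ.toAddMonoidHom).comp j with hF
  have hFzero : ∀ x, F x = 0 ↔
      x ∈ (Λ ⊓ ℓ₁.toAddSubgroup).addSubgroupOf (Λ.map q.toAddMonoidHom) := by
    intro x
    rw [AddSubgroup.mem_addSubgroupOf]
    show B'.mkQ (j x) = 0 ↔ _
    rw [Submodule.mkQ_apply, Submodule.Quotient.mk_eq_zero, hB', Submodule.mem_comap]
    exact Iff.rfl
  set G := QuotientAddGroup.lift _ F (fun x hx => (hFzero x).2 hx) with hG
  have hGinj : Function.Injective G := by
    intro u v
    refine QuotientAddGroup.induction_on u fun a => QuotientAddGroup.induction_on v fun b h => ?_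
    have hFa : F a = F b := h
    rw [QuotientAddGroup.eq]
    refine (hFzero _).1 ?_
    rw [map_add, map_neg, hFa, neg_add_cancel]
  have hfinQ : Finite (↥(Λ.map q.toAddMonoidHom) ⧸
      (Λ ⊓ ℓ₁.toAddSubgroup).addSubgroupOf (Λ.map q.toAddMonoidHom)) :=
    Finite.of_injective G hGinj
  -- discreteness
  refine ⟨?_, hle, hfinQ⟩
  set n := Nat.card (↥(Λ.map q.toAddMonoidHom) ⧸
      (Λ ⊓ ℓ₁.toAddSubgroup).addSubgroupOf (Λ.map q.toAddMonoidHom)) with hn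
  have hnpos : 0 < n := Nat.card_pos
  have hne0 : ((n : ℝ)) ≠ 0 := Nat.cast_ne_zero.mpr hnpos.ne'
  have hkey : ∀ x ∈ Λ.map q.toAddMonoidHom, n • x ∈ (Λ ⊓ ℓ₁.toAddSubgroup) := by
    intro x hx
    have h0 : (n • (QuotientAddGroup.mk (⟨x, hx⟩ : ↥(Λ.map q.toAddMonoidHom)))
        : ↥(Λ.map q.toAddMonoidHom) ⧸
          (Λ ⊓ ℓ₁.toAddSubgroup).addSubgroupOf (Λ.map q.toAddMonoidHom)) = 0 :=
      card_nsmul_eq_zero'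
    rw [← QuotientAddGroup.mk_nsmul, QuotientAddGroup.eq_zero_iff,
      AddSubgroup.mem_addSubgroupOf] at h0
    exact h0
  have hBsub : ((Λ ⊓ ℓ₁.toAddSubgroup : AddSubgroup (ℂ × ℂ)) : Set (ℂ × ℂ))
      ⊆ (Λ : Set (ℂ × ℂ)) := fun x hx => hx.1
  have hBd : DiscreteTopology ((Λ ⊓ ℓ₁.toAddSubgroup : AddSubgroup (ℂ × ℂ)) : Set (ℂ × ℂ)) :=
    DiscreteTopology.of_subset hdisc hBsub
  set e : (ℂ × ℂ) ≃ₜ (ℂ × ℂ) := Homeomorph.smulOfNeZero ((n : ℝ)⁻¹) (inv_ne_zero hne0) with he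
  have himg : DiscreteTopology
      (e '' ((Λ ⊓ ℓ₁.toAddSubgroup : AddSubgroup (ℂ × ℂ)) : Set (ℂ × ℂ))) :=
    (e.image _).symm.isEmbedding.discreteTopology
  have hsub : ((Λ.map q.toAddMonoidHom : AddSubgroup (ℂ × ℂ)) : Set (ℂ × ℂ))
      ⊆ e '' ((Λ ⊓ ℓ₁.toAddSubgroup : AddSubgroup (ℂ × ℂ)) : Set (ℂ × ℂ)) := by
    intro x hx
    refine ⟨n • x, hkey x hx, ?_⟩
    show ((n : ℝ)⁻¹) • (n • x) = x
    rw [← Nat.cast_smul_eq_nsmul ℝ, inv_smul_smul₀ hne0]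
  exact DiscreteTopology.of_subset himg hsub
end

section
/- Let Λ be a lattice in ℂ², and let ℓ₁, ℓ₂, ℓ₃ be pairwise distinct one-dimensional ℂ-subspaces of ℂ² such that, for i = 1, 2, 3, the intersection Λ ∩ ℓᵢ spans ℓᵢ over ℝ. Then there exists a ℂ-linear map f : ℂ² → ℂ² such that f maps ℓ₃ into ℓ₁, the restriction of f to ℓ₃ is injective (equivalently, f is nonzero on ℓ₃), and f maps Λ ∩ ℓ₃ into Λ ∩ ℓ₁. -/
section Aux

/-- Two distinct lines in a finite-dimensional space are disjoint. -/
lemma line_disj_aux {V : Type*} [AddCommGroup V] [Module ℂ V] [FiniteDimensional ℂ V]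
    (a b : Submodule ℂ V) (ha : Module.finrank ℂ a = 1) (hb : Module.finrank ℂ b = 1)
    (hab : a ≠ b) : a ⊓ b = ⊥ := by
  by_contra h
  obtain ⟨x, hx, hx0⟩ := (Submodule.ne_bot_iff _).mp h
  have hxa : Submodule.span ℂ {x} ≤ a := (Submodule.span_singleton_le_iff_mem _ _).mpr hx.1
  have hxb : Submodule.span ℂ {x} ≤ b := (Submodule.span_singleton_le_iff_mem _ _).mpr hx.2
  have hsx : Module.finrank ℂ (Submodule.span ℂ ({x} : Set V)) = 1 :=
    finrank_span_singleton hx0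
  have ea : Submodule.span ℂ ({x} : Set V) = a :=
    Submodule.eq_of_le_of_finrank_le hxa (by rw [ha, hsx])
  have eb : Submodule.span ℂ ({x} : Set V) = b :=
    Submodule.eq_of_le_of_finrank_le hxb (by rw [hb, hsx])
  exact hab (ea ▸ eb)

lemma line_sup_aux {V : Type*} [AddCommGroup V] [Module ℂ V] [FiniteDimensional ℂ V]
    (hV : Module.finrank ℂ V = 2)
    (a b : Submodule ℂ V) (ha : Module.finrank ℂ a = 1) (hb : Module.finrank ℂ b = 1)
    (hab : a ≠ b) : a ⊔ b = ⊤ := by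
  have hlt : a < a ⊔ b := by
    rcases lt_or_eq_of_le (le_sup_left : a ≤ a ⊔ b) with h | h
    · exact h
    · exfalso
      have hba : b ≤ a := by rw [h]; exact le_sup_right
      exact hab ((Submodule.eq_of_le_of_finrank_le hba (by rw [ha, hb])).symm)
  have h2 : 2 ≤ Module.finrank ℂ (a ⊔ b : Submodule ℂ V) := by
    have := Submodule.finrank_lt_finrank_of_lt hlt
    omega
  have h2' : Module.finrank ℂ (a ⊔ b : Submodule ℂ V) ≤ 2 := hV ▸ Submodule.finrank_le _
  exact Submodule.eq_top_of_finrank_eq (by omega)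

end Aux

/-- For a lattice `Λ` in `ℂ²` and pairwise distinct complex lines `ℓ₁, ℓ₂, ℓ₃` such
that `Λ ∩ ℓᵢ` spans `ℓᵢ` over `ℝ`, there is a `ℂ`-linear map `f : ℂ² → ℂ²` mapping
`ℓ₃` into `ℓ₁`, injective on `ℓ₃`, and mapping `Λ ∩ ℓ₃` into `Λ ∩ ℓ₁`. -/
theorem exists_isogeny_map (Λ : AddSubgroup (ℂ × ℂ))
    (hdisc : DiscreteTopology Λ)
    (hspan : Submodule.span ℝ (Λ : Set (ℂ × ℂ)) = ⊤)
    (ℓ₁ ℓ₂ ℓ₃ : Submodule ℂ (ℂ × ℂ))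
    (h₁ : Module.finrank ℂ ℓ₁ = 1) (h₂ : Module.finrank ℂ ℓ₂ = 1)
    (h₃ : Module.finrank ℂ ℓ₃ = 1)
    (h12 : ℓ₁ ≠ ℓ₂) (h13 : ℓ₁ ≠ ℓ₃) (h23 : ℓ₂ ≠ ℓ₃)
    (hs₁ : Submodule.span ℝ ((Λ : Set (ℂ × ℂ)) ∩ (ℓ₁ : Set (ℂ × ℂ))) =
      ℓ₁.restrictScalars ℝ)
    (hs₂ : Submodule.span ℝ ((Λ : Set (ℂ × ℂ)) ∩ (ℓ₂ : Set (ℂ × ℂ))) =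
      ℓ₂.restrictScalars ℝ)
    (hs₃ : Submodule.span ℝ ((Λ : Set (ℂ × ℂ)) ∩ (ℓ₃ : Set (ℂ × ℂ))) =
      ℓ₃.restrictScalars ℝ) :
    ∃ f : (ℂ × ℂ) →ₗ[ℂ] (ℂ × ℂ),
      (∀ x ∈ ℓ₃, f x ∈ ℓ₁) ∧
      (∀ x ∈ ℓ₃, f x = 0 → x = 0) ∧
      (∀ x : ℂ × ℂ, x ∈ Λ → x ∈ ℓ₃ → f x ∈ Λ ∧ f x ∈ ℓ₁) := by
  classical
  have hfr : Module.finrank ℂ (ℂ × ℂ) = 2 := by simp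
  -- ℓ₁ and ℓ₂ are complementary
  have hcompl : IsCompl ℓ₁ ℓ₂ :=
    ⟨disjoint_iff.mpr (line_disj_aux ℓ₁ ℓ₂ h₁ h₂ h12),
     codisjoint_iff.mpr (line_sup_aux hfr ℓ₁ ℓ₂ h₁ h₂ h12)⟩
  set p : (ℂ × ℂ) →ₗ[ℂ] ℓ₁ := Submodule.linearProjOfIsCompl ℓ₁ ℓ₂ hcompl with hp
  set f₀ : (ℂ × ℂ) →ₗ[ℂ] (ℂ × ℂ) := ℓ₁.subtype ∘ₗ p with hf₀
  -- the lattice as a ℤ-submodule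
  set ΛM : Submodule ℤ (ℂ × ℂ) := AddSubgroup.toIntSubmodule Λ with hΛM
  haveI hdiscM : DiscreteTopology ΛM := hdisc
  haveI : IsZLattice ℝ ΛM := ⟨hspan⟩
  set L1 : Submodule ℤ (ℂ × ℂ) := ΛM ⊓ (ℓ₁.restrictScalars ℤ) with hL1
  set L2 : Submodule ℤ (ℂ × ℂ) := ΛM ⊓ (ℓ₂.restrictScalars ℤ) with hL2
  set L' : Submodule ℤ (ℂ × ℂ) := L1 ⊔ L2 with hL'
  have hL'le : L' ≤ ΛM := sup_le inf_le_left inf_le_left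
  haveI : DiscreteTopology L' :=
    DiscreteTopology.of_subset hdiscM (SetLike.coe_subset_coe.mpr hL'le)
  have hspan' : Submodule.span ℝ (L' : Set (ℂ × ℂ)) = ⊤ := by
    rw [eq_top_iff]
    rintro x -
    have hx : x ∈ ℓ₁ ⊔ ℓ₂ := by
      rw [line_sup_aux hfr ℓ₁ ℓ₂ h₁ h₂ h12]; trivial
    obtain ⟨a, ha, b, hb, rfl⟩ := Submodule.mem_sup.mp hx
    have haL : a ∈ Submodule.span ℝ (L' : Set (ℂ × ℂ)) := by
      have h' : a ∈ Submodule.span ℝ ((Λ : Set (ℂ × ℂ)) ∩ (ℓ₁ : Set (ℂ × ℂ))) := by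
        rw [hs₁]; exact ha
      refine Submodule.span_mono ?_ h'
      rintro y ⟨hy1, hy2⟩
      exact Submodule.mem_sup_left (Submodule.mem_inf.mpr ⟨hy1, hy2⟩)
    have hbL : b ∈ Submodule.span ℝ (L' : Set (ℂ × ℂ)) := by
      have h' : b ∈ Submodule.span ℝ ((Λ : Set (ℂ × ℂ)) ∩ (ℓ₂ : Set (ℂ × ℂ))) := by
        rw [hs₂]; exact hb
      refine Submodule.span_mono ?_ h'
      rintro y ⟨hy1, hy2⟩
      exact Submodule.mem_sup_right (Submodule.mem_inf.mpr ⟨hy1, hy2⟩)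
    exact Submodule.add_mem _ haL hbL
  haveI : IsZLattice ℝ L' := ⟨hspan'⟩
  haveI : Module.Free ℤ L' := ZLattice.module_free ℝ L'
  haveI : Module.Finite ℤ L' := ZLattice.module_finite ℝ L'
  set b : Module.Basis (Module.Free.ChooseBasisIndex ℤ L') ℤ L' := Module.Free.chooseBasis ℤ L' with hb
  set bR := b.ofZLatticeBasis ℝ L' with hbR
  have hclosed : IsClosed (ΛM : Set (ℂ × ℂ)) := AddSubgroup.isClosed_of_discrete (H := Λ)
  have hSfin : ((ZSpan.fundamentalDomain bR) ∩ (ΛM : Set (ℂ × ℂ))).Finite :=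
    Metric.finite_isBounded_inter_isClosed DiscreteTopology.isDiscrete (ZSpan.fundamentalDomain_isBounded bR) hclosed
  set k : ℕ := hSfin.toFinset.card with hk
  set N : ℕ := Nat.factorial k with hN
  have hNpos : 0 < N := Nat.factorial_pos k
  -- key torsion statement
  have key : ∀ x ∈ ΛM, (N : ℤ) • x ∈ L' := by
    intro x hx
    have hmaps : ∀ n ∈ Finset.range (k + 1),
        ZSpan.fract bR ((n : ℤ) • x) ∈ hSfin.toFinset := by
      intro n _
      rw [Set.Finite.mem_toFinset]
      refine ⟨ZSpan.fract_mem_fundamentalDomain bR _, ?_⟩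
      have hspanle : Submodule.span ℤ (Set.range ⇑bR) ≤ L' :=
        le_of_eq (b.ofZLatticeBasis_span ℝ)
      have hfl : (ZSpan.floor bR ((n : ℤ) • x) : ℂ × ℂ) ∈ L' :=
        hspanle (SetLike.coe_mem _)
      rw [ZSpan.fract_apply]
      exact sub_mem (ΛM.smul_mem _ hx) (hL'le hfl)
    obtain ⟨m, hm, n, hn, hmn, heq⟩ :=
      Finset.exists_ne_map_eq_of_card_lt_of_maps_to (by simp [hk]) hmaps
    -- wlog m < n
    rcases hmn.lt_or_gt with hlt | hlt
    case _ =>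
      have hd : ((n - m : ℕ) : ℤ) • x ∈ L' := by
        have hspanle : Submodule.span ℤ (Set.range ⇑bR) ≤ L' :=
          le_of_eq (b.ofZLatticeBasis_span ℝ)
        have := hspanle ((ZSpan.fract_eq_fract bR ((m : ℤ) • x) ((n : ℤ) • x)).mp heq)
        have he : -((m : ℤ) • x) + (n : ℤ) • x = ((n - m : ℕ) : ℤ) • x := by
          rw [neg_add_eq_sub, ← sub_smul]
          congr 1
          omega
        rwa [he] at this
      have hdvd : (n - m) ∣ N := Nat.dvd_factorial (by omega) (by
        have := Finset.mem_range.mp hn; omega)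
      obtain ⟨c, hc⟩ := hdvd
      have : (N : ℤ) • x = (c : ℤ) • (((n - m : ℕ) : ℤ) • x) := by
        rw [smul_smul, ← Nat.cast_mul, mul_comm c (n - m), ← hc]
      rw [this]
      exact L'.smul_mem _ hd
    case _ =>
      have hd : ((m - n : ℕ) : ℤ) • x ∈ L' := by
        have hspanle : Submodule.span ℤ (Set.range ⇑bR) ≤ L' :=
          le_of_eq (b.ofZLatticeBasis_span ℝ)
        have := hspanle ((ZSpan.fract_eq_fract bR ((n : ℤ) • x) ((m : ℤ) • x)).mp heq.symm)
        have he : -((n : ℤ) • x) + (m : ℤ) • x = ((m - n : ℕ) : ℤ) • x := by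
          rw [neg_add_eq_sub, ← sub_smul]
          congr 1
          omega
        rwa [he] at this
      have hdvd : (m - n) ∣ N := Nat.dvd_factorial (by omega) (by
        have := Finset.mem_range.mp hm; omega)
      obtain ⟨c, hc⟩ := hdvd
      have : (N : ℤ) • x = (c : ℤ) • (((m - n : ℕ) : ℤ) • x) := by
        rw [smul_smul, ← Nat.cast_mul, mul_comm c (m - n), ← hc]
      rw [this]
      exact L'.smul_mem _ hd
  -- the map
  refine ⟨(N : ℂ) • f₀, ?_, ?_, ?_⟩
  · intro x _
    simp only [LinearMap.smul_apply, hf₀, LinearMap.comp_apply, Submodule.coe_subtype]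
    exact ℓ₁.smul_mem _ (SetLike.coe_mem _)
  · intro x hx3 hfx
    have hNC : (N : ℂ) ≠ 0 := by
      exact_mod_cast Nat.factorial_ne_zero k
    have hf0 : f₀ x = 0 := by
      have := hfx
      rw [LinearMap.smul_apply] at this
      exact (smul_eq_zero.mp this).resolve_left hNC
    have hpx : p x = 0 := by
      have : ℓ₁.subtype (p x) = 0 := hf0
      exact Subtype.ext this
    have hx2 : x ∈ ℓ₂ := by
      exact (Submodule.projectionOnto_apply_eq_zero_iff hcompl).mp hpx
    have : x ∈ ℓ₂ ⊓ ℓ₃ := ⟨hx2, hx3⟩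
    rwa [line_disj_aux ℓ₂ ℓ₃ h₂ h₃ h23, Submodule.mem_bot] at this
  · intro x hxΛ _
    have hxM : x ∈ ΛM := hxΛ
    obtain ⟨a, ha, c, hc, hac⟩ := Submodule.mem_sup.mp (key x hxM)
    have ha1 : a ∈ ℓ₁ := (Submodule.mem_inf.mp ha).2
    have haΛ : a ∈ Λ := (Submodule.mem_inf.mp ha).1
    have hc2 : c ∈ ℓ₂ := (Submodule.mem_inf.mp hc).2
    have hfa : f₀ a = a := by
      have : p a = ⟨a, ha1⟩ := Submodule.linearProjOfIsCompl_apply_left hcompl ⟨a, ha1⟩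
      simp [hf₀, this]
    have hfc : f₀ c = 0 := by
      have : p c = 0 := (Submodule.projectionOnto_apply_eq_zero_iff hcompl).mpr hc2
      simp [hf₀, this]
    have hfx : ((N : ℂ) • f₀) x = a := by
      rw [LinearMap.smul_apply]
      have hsm : (N : ℂ) • f₀ x = f₀ ((N : ℂ) • x) := (map_smul f₀ _ _).symm
      have hNx : (N : ℂ) • x = (N : ℤ) • x := by
        rw [← Int.cast_smul_eq_zsmul ℂ]
        norm_num
      calc (N : ℂ) • f₀ x = f₀ ((N : ℂ) • x) := hsm
        _ = f₀ ((N : ℤ) • x) := by rw [hNx]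
        _ = f₀ (a + c) := by rw [hac]
        _ = f₀ a + f₀ c := map_add _ _ _
        _ = a := by rw [hfa, hfc, add_zero]
    rw [hfx]
    exact ⟨haΛ, ha1⟩
end
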